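/- With f as above and p = ||f||^2, the coefficient of x_i^2 x_j^2 (for i ≠ j) in p equals ⟨f_{x_i x_j}, f_{x_i x_j}⟩ + (1/2)⟨f_{x_i x_i}, f_{x_j x_j}⟩. -/

import Mathlib

open MvPolynomial

lemma coeff_pderiv {n : ℕ} (i : Fin n) (m : Fin n →₀ ℕ) (q : MvPolynomial (Fin n) ℝ) :
    coeff m (pderiv i q) = ((m i : ℝ) + 1) * coeff (m + Finsupp.single i 1) q := by
  induction q using MvPolynomial.induction_on' with
  | add p q hp hq => simp [hp, hq, mul_add]
  | monomial s a =>
    rw [pderiv_monomial, coeff_monomial, coeff_monomial]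
    by_cases h : s = m + Finsupp.single i 1
    · subst h
      have h1 : m + Finsupp.single i 1 - Finsupp.single i 1 = m := by
        ext k; simp
      have h2 : ((m + Finsupp.single i 1) : Fin n →₀ ℕ) i = m i + 1 := by simp
      rw [if_pos h1, if_pos rfl, h2]
      push_cast; ring
    · rw [if_neg h]
      by_cases hs : s i = 0
      · split <;> simp [hs]
      · have : s - Finsupp.single i 1 ≠ m := by
          intro he
          apply h
          rw [← he, tsub_add_cancel_of_le]
          rwa [Finsupp.single_le_iff, Nat.one_le_iff_ne_zero]
        rw [if_neg this, mul_zero]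

lemma d2_mixed {n : ℕ} {i j : Fin n} (hij : i ≠ j) (q : MvPolynomial (Fin n) ℝ) :
    constantCoeff (pderiv i (pderiv j q)) =
      coeff (Finsupp.single i 1 + Finsupp.single j 1) q := by
  rw [constantCoeff_eq]
  simp only [coeff_pderiv]
  have h0 : ((0 : Fin n →₀ ℕ) i : ℝ) = 0 := by simp
  have h1 : ((Finsupp.single i 1 : Fin n →₀ ℕ) j : ℝ) = 0 := by
    simp [Finsupp.single_apply, hij]
  rw [zero_add, h1]
  simp

lemma d2_same {n : ℕ} (i : Fin n) (q : MvPolynomial (Fin n) ℝ) :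
    constantCoeff (pderiv i (pderiv i q)) = 2 * coeff (Finsupp.single i 2) q := by
  rw [constantCoeff_eq]
  simp only [coeff_pderiv]
  have h1 : ((((0 : Fin n →₀ ℕ) + Finsupp.single i 1) : Fin n →₀ ℕ) i : ℝ) = 1 := by simp
  have h2 : (0 : Fin n →₀ ℕ) + Finsupp.single i 1 + Finsupp.single i 1
      = Finsupp.single i 2 := by
    ext k; simp [Finsupp.single_apply]; split <;> simp
  rw [h1, h2]
  simp only [Finsupp.coe_zero, Pi.zero_apply, Nat.cast_zero]
  ring

lemma key {n : ℕ} {i j : Fin n} (hij : i ≠ j) (q : MvPolynomial (Fin n) ℝ)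
    (hq : q.IsHomogeneous 2) :
    coeff (Finsupp.single i 2 + Finsupp.single j 2) (q * q) =
      coeff (Finsupp.single i 1 + Finsupp.single j 1) q *
        coeff (Finsupp.single i 1 + Finsupp.single j 1) q +
      2 * (coeff (Finsupp.single i 2) q * coeff (Finsupp.single j 2) q) := by
  classical
  set u : Fin n →₀ ℕ := Finsupp.single i 1 + Finsupp.single j 1 with hu
  set m : Fin n →₀ ℕ := Finsupp.single i 2 + Finsupp.single j 2 with hm
  set S : Finset ((Fin n →₀ ℕ) × (Fin n →₀ ℕ)) :=
    {(Finsupp.single i 2, Finsupp.single j 2),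
     (Finsupp.single j 2, Finsupp.single i 2), (u, u)} with hS
  have hmi : m i = 2 := by simp [hm, Finsupp.single_apply, hij, Ne.symm hij]
  have hmj : m j = 2 := by simp [hm, Finsupp.single_apply, hij, Ne.symm hij]
  have hmo : ∀ k, k ≠ i → k ≠ j → m k = 0 := by
    intro k hki hkj
    simp [hm, Finsupp.single_apply, Ne.symm hki, Ne.symm hkj]
  have hui : u i = 1 := by simp [hu, Finsupp.single_apply, hij, Ne.symm hij]
  have huj : u j = 1 := by simp [hu, Finsupp.single_apply, hij, Ne.symm hij]
  have huu : u + u = m := by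
    ext k
    by_cases hki : i = k <;> by_cases hkj : j = k <;>
      simp [hu, hm, Finsupp.single_apply, hki, hkj]
  have hsub : S ⊆ Finset.HasAntidiagonal.antidiagonal m := by
    intro x hx
    simp only [hS, Finset.mem_insert, Finset.mem_singleton] at hx
    rw [Finset.HasAntidiagonal.mem_antidiagonal]
    rcases hx with h | h | h <;> subst h
    · rfl
    · exact add_comm _ _
    · exact huu
  have hvanish : ∀ x ∈ Finset.HasAntidiagonal.antidiagonal m, x ∉ S →
      coeff x.1 q * coeff x.2 q = 0 := by
    intro x hx hxS
    by_contra h0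
    obtain ⟨h1, h2⟩ := mul_ne_zero_iff.mp h0
    rw [Finset.HasAntidiagonal.mem_antidiagonal] at hx
    have hpt : ∀ k, x.1 k + x.2 k = m k := fun k => by
      rw [← Finsupp.add_apply, hx]
    have ho : ∀ k, k ≠ i → k ≠ j → x.1 k = 0 ∧ x.2 k = 0 := by
      intro k hki hkj
      have := hpt k
      rw [hmo k hki hkj] at this
      omega
    have hd1 : x.1.degree = 2 := by
      by_contra hd; exact h1 (hq.coeff_eq_zero hd)
    have hsupp : x.1.support ⊆ {i, j} := by
      intro k hk
      rw [Finsupp.mem_support_iff] at hk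
      by_contra hk2
      simp only [Finset.mem_insert, Finset.mem_singleton, not_or] at hk2
      exact hk ((ho k hk2.1 hk2.2).1)
    have hdeg : x.1 i + x.1 j = 2 := by
      have hs := Finset.sum_subset hsupp
        (fun k _ hk => Finsupp.notMem_support_iff.mp hk)
      rw [Finset.sum_pair hij] at hs
      have hd1' : ∑ k ∈ x.1.support, x.1 k = 2 := hd1
      rw [hs] at hd1'
      exact hd1'
    have hpi := hpt i; rw [hmi] at hpi
    have hpj := hpt j; rw [hmj] at hpj
    apply hxS
    have hpair : ∀ (a b : Fin n →₀ ℕ), x.1 i = a i → x.1 j = a j →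
        x.2 i = b i → x.2 j = b j →
        (∀ k, k ≠ i → k ≠ j → a k = 0 ∧ b k = 0) → x = (a, b) := by
      intro a b e1i e1j e2i e2j hab
      have e1 : x.1 = a := by
        ext k
        by_cases hki : k = i
        · subst hki; exact e1i
        · by_cases hkj : k = j
          · subst hkj; exact e1j
          · rw [(ho k hki hkj).1, (hab k hki hkj).1]
      have e2 : x.2 = b := by
        ext k
        by_cases hki : k = i
        · subst hki; exact e2i
        · by_cases hkj : k = j
          · subst hkj; exact e2j
          · rw [(ho k hki hkj).2, (hab k hki hkj).2]
      exact Prod.ext e1 e2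
    simp only [hS, Finset.mem_insert, Finset.mem_singleton]
    have sii : (Finsupp.single i 2 : Fin n →₀ ℕ) i = 2 := by simp
    have sij : (Finsupp.single i 2 : Fin n →₀ ℕ) j = 0 := by
      simp [Finsupp.single_apply, hij]
    have sji : (Finsupp.single j 2 : Fin n →₀ ℕ) i = 0 := by
      simp [Finsupp.single_apply, Ne.symm hij]
    have sjj : (Finsupp.single j 2 : Fin n →₀ ℕ) j = 2 := by simp
    have hcases : x.1 i = 0 ∨ x.1 i = 1 ∨ x.1 i = 2 := by omega
    rcases hcases with h | h | h
    · right; left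
      apply hpair
      · rw [sji]; omega
      · rw [sjj]; omega
      · rw [sii]; omega
      · rw [sij]; omega
      · intro k hki hkj
        constructor <;> simp [Finsupp.single_apply, Ne.symm hki, Ne.symm hkj]
    · right; right
      apply hpair
      · rw [hui]; omega
      · rw [huj]; omega
      · rw [hui]; omega
      · rw [huj]; omega
      · intro k hki hkj
        constructor <;> simp [hu, Finsupp.single_apply, Ne.symm hki, Ne.symm hkj]
    · left
      apply hpair
      · rw [sii]; omega
      · rw [sij]; omega
      · rw [sji]; omega
      · rw [sjj]; omega
      · intro k hki hkj
        constructor <;> simp [Finsupp.single_apply, Ne.symm hki, Ne.symm hkj]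
  rw [coeff_mul, ← Finset.sum_subset hsub hvanish]
  have ne1 : (Finsupp.single i 2 : Fin n →₀ ℕ) ≠ Finsupp.single j 2 := by
    intro h
    have := DFunLike.congr_fun h i
    simp [Finsupp.single_apply, hij, Ne.symm hij] at this
  have ne2 : (Finsupp.single i 2 : Fin n →₀ ℕ) ≠ u := by
    intro h
    have := DFunLike.congr_fun h j
    rw [huj] at this
    simp [Finsupp.single_apply, hij] at this
  have ne3 : (Finsupp.single j 2 : Fin n →₀ ℕ) ≠ u := by
    intro h
    have := DFunLike.congr_fun h i
    rw [hui] at this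
    simp [Finsupp.single_apply, Ne.symm hij] at this
  rw [hS, Finset.sum_insert (by simp [Prod.ext_iff, ne1, ne2]),
    Finset.sum_insert (by simp [Prod.ext_iff, ne1.symm, ne3]),
    Finset.sum_singleton]
  ring

/-- For `f : ℝⁿ → ℝᵏ` with homogeneous quadratic coordinates and `p = ‖f‖²`,
the coefficient of `xᵢ²xⱼ²` (`i ≠ j`) in `p` equals
`⟨f_{xᵢxⱼ}, f_{xᵢxⱼ}⟩ + (1/2)⟨f_{xᵢxᵢ}, f_{xⱼxⱼ}⟩`. -/
theorem coeff_sq_sq (n k : ℕ) (f : Fin k → MvPolynomial (Fin n) ℝ)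
    (hf : ∀ l, (f l).IsHomogeneous 2) (i j : Fin n) (hij : i ≠ j) :
    MvPolynomial.coeff (Finsupp.single i 2 + Finsupp.single j 2) (∑ l, f l ^ 2) =
      (∑ l, (constantCoeff (pderiv i (pderiv j (f l)))) *
        (constantCoeff (pderiv i (pderiv j (f l))))) +
      (1 / 2) * ∑ l, (constantCoeff (pderiv i (pderiv i (f l)))) *
        (constantCoeff (pderiv j (pderiv j (f l)))) := by
  have hL : coeff (Finsupp.single i 2 + Finsupp.single j 2) (∑ l, f l ^ 2)
      = ∑ l, coeff (Finsupp.single i 2 + Finsupp.single j 2) (f l * f l) := by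
    rw [coeff_sum]
    exact Finset.sum_congr rfl fun l _ => by rw [sq]
  rw [hL]
  simp only [d2_mixed hij, d2_same]
  rw [Finset.sum_congr rfl (fun l _ => key hij (f l) (hf l)),
    Finset.sum_add_distrib, Finset.mul_sum]
  congr 1
  exact Finset.sum_congr rfl fun l _ => by ring
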